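/- arXiv:2206.00526 — 2 statements merged into one kernel-verified Lean document; each statement's English description precedes it below -/
import Mathlib

section
/- Let W₁ be a closed walk obtained as the arc-disjoint union (after removing opposite arc pairs) of a cycle B with τ(B) = 0 in a residual network N_x and a cycle B' in N_{x+χ^B}. If every cycle of N_x has nonnegative transit time, then B' has nonnegative transit time: indeed, the Eulerian graph induced by the arcs of B and B' (with opposite arcs cancelled) decomposes into cycles of N_x whose transit times sum to τ(B) + τ(B') = τ(B'), and each of these transit times is nonnegative. -/
/-- A chain of arcs from `p` to `q`: each arc's tail matches the current vertex. -/
def ArcChain {W E : Type*} (tl hd : E → W) : W → W → List E → Prop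
  | p, q, [] => p = q
  | p, q, e :: l => tl e = p ∧ ArcChain tl hd (hd e) q l

/-- A network: a directed multigraph with a source, a sink and integral arc capacities. -/
structure Network (V A : Type*) where
  tail : A → V
  head : A → V
  s : V
  t : V
  u : A → ℤ

/-- Transit times extended to residual (backward) arcs by negation. -/
def resTT {A : Type*} (τ : A → ℕ) : A ⊕ A → ℤ :=
  Sum.elim (fun a => (τ a : ℤ)) (fun a => -(τ a : ℤ))

/-- Costs extended to residual (backward) arcs by negation. -/
def resC {A : Type*} (c : A → ℤ) : A ⊕ A → ℤ := Sum.elim c (fun a => -c a)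

/-- The partial (prefix) sums of `g` along a list, starting with `0`. -/
def psums {E : Type*} (g : E → ℤ) : List E → List ℤ
  | [] => [0]
  | e :: l => 0 :: (psums g l).map (fun z => g e + z)

/-- Minimum partial sum (the `0` seed is itself always a partial sum). -/
def hlo {E : Type*} (g : E → ℤ) (l : List E) : ℤ := (psums g l).foldr min 0

/-- Maximum partial sum. -/
def hhi {E : Type*} (g : E → ℤ) (l : List E) : ℤ := (psums g l).foldr max 0

/-- The height of a walk: maximum minus minimum partial sum of transit times. -/
def spreadOf {E : Type*} (g : E → ℤ) (l : List E) : ℤ := hhi g l - hlo g l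

namespace Network
variable {V A : Type*} (N : Network V A)

/-- Tail of a residual arc: `Sum.inl a` is the forward copy of `a`, `Sum.inr a` backward. -/
def resTail : A ⊕ A → V := Sum.elim N.tail N.head

def resHead : A ⊕ A → V := Sum.elim N.head N.tail

/-- Residual capacity of a residual arc with respect to a flow `x`. -/
def resCap (x : A → ℤ) : A ⊕ A → ℤ := Sum.elim (fun a => N.u a - x a) x

/-- A walk in the residual network `N_x`. -/
def IsResWalk (x : A → ℤ) (p q : V) (l : List (A ⊕ A)) : Prop :=
  ArcChain N.resTail N.resHead p q l ∧ ∀ e ∈ l, 0 < N.resCap x e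

/-- A cycle in the residual network `N_x`. -/
def IsResCycle (x : A → ℤ) (p : V) (l : List (A ⊕ A)) : Prop :=
  N.IsResWalk x p p l ∧ l ≠ [] ∧ (l.map N.resHead).Nodup

/-- A feasible static `s`-`t` flow: capacities and conservation at intermediate nodes. -/
def Feasible [Fintype A] [DecidableEq V] (x : A → ℤ) : Prop :=
  (∀ a, 0 ≤ x a ∧ x a ≤ N.u a) ∧
  ∀ v, v ≠ N.s → v ≠ N.t →
    (∑ a : A, if N.head a = v then x a else 0) = (∑ a : A, if N.tail a = v then x a else 0)

/-- The value of a flow: net outflow of the source. -/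
def value [Fintype A] [DecidableEq V] (x : A → ℤ) : ℤ :=
  (∑ a : A, if N.tail a = N.s then x a else 0) - (∑ a : A, if N.head a = N.s then x a else 0)

/-- A maximum `s`-`t` flow: feasible and of maximal value. -/
def IsMaxFlow [Fintype A] [DecidableEq V] (x : A → ℤ) : Prop :=
  N.Feasible x ∧ ∀ y : A → ℤ, N.Feasible y → N.value y ≤ N.value x

/-- Reachability in the residual network `N_x`. -/
def ResReach (x : A → ℤ) : V → V → Prop :=
  Relation.ReflTransGen
    (fun p q => ∃ e : A ⊕ A, 0 < N.resCap x e ∧ N.resTail e = p ∧ N.resHead e = q)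

end Network


lemma arcChain_append {W E : Type*} {tl hd : E → W} {p q r : W} :
    ∀ {l1 l2 : List E}, ArcChain tl hd p q l1 → ArcChain tl hd q r l2 →
      ArcChain tl hd p r (l1 ++ l2) := by
  intro l1
  induction l1 generalizing p with
  | nil => intro l2 h1 h2; cases h1; simpa using h2
  | cons e l ih => intro l2 h1 h2; exact ⟨h1.1, ih h1.2 h2⟩

lemma arcChain_of_append {W E : Type*} {tl hd : E → W} {q : W} :
    ∀ {l1 : List E} {e : E} {l2 : List E} {p : W},
      ArcChain tl hd p q (l1 ++ e :: l2) → ArcChain tl hd (hd e) q l2 := by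
  intro l1
  induction l1 with
  | nil => intro e l2 p h; exact h.2
  | cons f l ih => intro e l2 p h; exact ih h.2

lemma arcChain_countP {W E : Type*} [DecidableEq W] {tl hd : E → W} :
    ∀ (l : List E) (p q : W), ArcChain tl hd p q l → ∀ v : W,
      l.countP (fun e => decide (hd e = v)) + (if p = v then 1 else 0)
      = l.countP (fun e => decide (tl e = v)) + (if q = v then 1 else 0) := by
  intro l
  induction l with
  | nil => intro p q h v; cases h; rfl
  | cons e l ih =>
    intro p q h v
    obtain ⟨he, hch⟩ := h
    have := ih (hd e) q hch v
    simp only [List.countP_cons, he, decide_eq_true_eq] at *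
    split_ifs at * <;> omega

lemma extract_cycle {V A : Type*} [DecidableEq V] [DecidableEq A] (N : Network V A)
    (M : Multiset (A ⊕ A))
    (hbal : ∀ v, M.countP (fun e => N.resHead e = v) = M.countP (fun e => N.resTail e = v)) :
    ∀ (n : ℕ) (p q : V) (l : List (A ⊕ A)), l ≠ [] →
      ArcChain N.resTail N.resHead p q l →
      (∀ e ∈ l, e ∈ M) → (l.map N.resHead).Nodup →
      (∃ e ∈ M, N.resHead e = q) →
      (M.toFinset.image N.resHead).card + 1 ≤ l.length + n →
      ∃ (r : V) (c : List (A ⊕ A)), c ≠ [] ∧ ArcChain N.resTail N.resHead r r c ∧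
        (c.map N.resHead).Nodup ∧ ∀ e ∈ c, e ∈ M := by
  intro n
  induction n with
  | zero =>
    intro p q l hne hch hmem hnd hq hcard
    exfalso
    have hsub : (l.map N.resHead).toFinset ⊆ M.toFinset.image N.resHead := by
      intro w hw
      simp only [List.mem_toFinset, List.mem_map] at hw
      obtain ⟨e, he, rfl⟩ := hw
      exact Finset.mem_image.mpr ⟨e, Multiset.mem_toFinset.mpr (hmem e he), rfl⟩
    have h1 : (l.map N.resHead).toFinset.card = l.length := by
      rw [List.toFinset_card_of_nodup hnd, List.length_map]
    have := Finset.card_le_card hsub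
    omega
  | succ n ih =>
    intro p q l hne hch hmem hnd hq hcard
    -- find a next arc out of q
    have hpos : 0 < M.countP (fun e => N.resTail e = q) := by
      rw [← hbal]
      exact Multiset.countP_pos.mpr hq
    obtain ⟨e', he'M, he'q⟩ := Multiset.countP_pos.mp hpos
    set w := N.resHead e' with hw
    by_cases hwin : w ∈ l.map N.resHead
    · -- close off a cycle
      obtain ⟨ei, heil, heiw⟩ := List.mem_map.mp hwin
      obtain ⟨l1, l2, rfl⟩ := List.append_of_mem heil
      refine ⟨w, l2 ++ [e'], by simp, ?_, ?_, ?_⟩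
      · have h2 : ArcChain N.resTail N.resHead (N.resHead ei) q l2 := arcChain_of_append hch
        rw [heiw] at h2
        exact arcChain_append h2 ⟨he'q, rfl⟩
      · have : (l2.map N.resHead ++ [w]).Nodup := by
          rw [List.nodup_append_comm]
          have : (N.resHead ei :: l2.map N.resHead).Nodup := by
            have := hnd
            simp only [List.map_append, List.map_cons] at this
            exact this.of_append_right
          simpa [heiw] using this
        simpa using this
      · intro e he
        rcases List.mem_append.mp he with h | h
        · exact hmem e (by simp [h])
        · simp at h; subst h; exact he'M
    · -- extend the walk
      refine ih p w (l ++ [e']) (by simp) (arcChain_append hch ⟨he'q, rfl⟩) ?_ ?_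
        ⟨e', he'M, rfl⟩ (by simp; omega)
      · intro e he
        rcases List.mem_append.mp he with h | h
        · exact hmem e h
        · simp at h; subst h; exact he'M
      · rw [List.map_append, List.nodup_append_comm]
        simp only [List.map_cons, List.map_nil, List.nil_append, List.singleton_append,
          List.nodup_cons]
        exact ⟨hwin, hnd⟩

lemma decomp {V A : Type*} [DecidableEq V] [DecidableEq A] (N : Network V A)
    (τ : A → ℕ) (x : A → ℤ)
    (hno : ∀ (q : V) (l : List (A ⊕ A)), N.IsResCycle x q l → 0 ≤ (l.map (resTT τ)).sum)
    (M : Multiset (A ⊕ A))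
    (hpos : ∀ e ∈ M, 0 < N.resCap x e)
    (hbal : ∀ v, M.countP (fun e => N.resHead e = v) = M.countP (fun e => N.resTail e = v)) :
    0 ≤ (M.map (resTT τ)).sum := by
  induction M using Multiset.strongInductionOn with
  | _ M ih =>
  by_cases hM : M = 0
  · simp [hM]
  obtain ⟨e₀, he₀⟩ := Multiset.exists_mem_of_ne_zero hM
  obtain ⟨r, c, hcne, hcch, hcnd, hcmem⟩ :=
    extract_cycle N M hbal ((M.toFinset.image N.resHead).card) (N.resTail e₀)
      (N.resHead e₀) [e₀] (by simp) ⟨rfl, rfl⟩ (by simpa using he₀) (by simp)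
      ⟨e₀, he₀, rfl⟩ (by simp [Nat.add_comm])
  have hcnd' : c.Nodup := List.Nodup.of_map _ hcnd
  have hle : (c : Multiset (A ⊕ A)) ≤ M := by
    rw [Multiset.le_iff_subset (by exact hcnd')]
    intro a ha
    exact hcmem a (by simpa using ha)
  set R := M - (c : Multiset (A ⊕ A)) with hR
  have hRc : R + (c : Multiset (A ⊕ A)) = M := tsub_add_cancel_of_le hle
  have hcyc : N.IsResCycle x r c :=
    ⟨⟨hcch, fun e he => hpos e (hcmem e he)⟩, hcne, hcnd⟩
  have hsum : 0 ≤ (Multiset.map (resTT τ) (c : Multiset (A ⊕ A))).sum := by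
    simpa using hno r c hcyc
  have hcbal : ∀ v, Multiset.countP (fun e => N.resHead e = v) (c : Multiset (A ⊕ A))
      = Multiset.countP (fun e => N.resTail e = v) (c : Multiset (A ⊕ A)) := by
    intro v
    have := arcChain_countP (tl := N.resTail) (hd := N.resHead) c r r hcch v
    simp only [Multiset.coe_countP]
    omega
  have hRbal : ∀ v, R.countP (fun e => N.resHead e = v) = R.countP (fun e => N.resTail e = v) := by
    intro v
    have h1 := hbal v
    rw [← hRc, Multiset.countP_add, Multiset.countP_add, hcbal v] at h1
    omega
  have hRpos : ∀ e ∈ R, 0 < N.resCap x e := by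
    intro e he
    exact hpos e (by rw [← hRc]; exact Multiset.mem_add.mpr (Or.inl he))
  have hlt : R < M := by
    rw [← hRc]
    have : 0 < (c : Multiset (A ⊕ A)) := by
      rcases c with _ | ⟨e, c⟩
      · exact absurd rfl hcne
      · exact Multiset.lt_iff_cons_le.mpr ⟨e, by simp⟩
    exact lt_add_of_pos_right R this
  have := ih R hlt hRpos hRbal
  calc (0:ℤ) ≤ (Multiset.map (resTT τ) R).sum + (Multiset.map (resTT τ) (c : Multiset (A⊕A))).sum :=
        add_nonneg this hsum
    _ = (Multiset.map (resTT τ) M).sum := by rw [← hRc, Multiset.map_add, Multiset.sum_add]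

def revArc {A : Type*} : A ⊕ A → A ⊕ A := Sum.elim Sum.inr Sum.inl

lemma revArc_injective {A : Type*} : Function.Injective (revArc (A := A)) := by
  intro a b h; cases a <;> cases b <;> simp [revArc] at h <;> simp [h]

lemma resHead_revArc {V A : Type*} (N : Network V A) (e : A ⊕ A) :
    N.resHead (revArc e) = N.resTail e := by cases e <;> rfl

lemma resTail_revArc {V A : Type*} (N : Network V A) (e : A ⊕ A) :
    N.resTail (revArc e) = N.resHead e := by cases e <;> rfl

lemma resTT_revArc {A : Type*} (τ : A → ℕ) (e : A ⊕ A) :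
    resTT τ (revArc e) = -resTT τ e := by cases e <;> simp [revArc, resTT]

lemma sum_map_neg_fun {α : Type*} (s : Multiset α) (f : α → ℤ) :
    (s.map (fun a => -f a)).sum = -(s.map f).sum := by
  induction s using Multiset.induction with
  | empty => simp
  | cons a s ih => simp [ih]; ring

instance sumLawfulBEq {α β : Type*} [BEq α] [BEq β] [LawfulBEq α] [LawfulBEq β] :
    LawfulBEq (α ⊕ β) where
  eq_of_beq {a b} h := by
    cases a with
    | inl a => cases b with
      | inl b => exact congrArg Sum.inl (eq_of_beq (show (a == b) = true from h))
      | inr b => exact Bool.noConfusion (show false = true from h)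
    | inr a => cases b with
      | inl b => exact Bool.noConfusion (show false = true from h)
      | inr b => exact congrArg Sum.inr (eq_of_beq (show (a == b) = true from h))
  rfl {a} := by
    cases a with
    | inl a => exact (show ((Sum.inl a : α ⊕ β) == Sum.inl a) = (a == a) from rfl).trans ReflBEq.rfl
    | inr a => exact (show ((Sum.inr a : α ⊕ β) == Sum.inr a) = (a == a) from rfl).trans ReflBEq.rfl


/-- If every cycle of the residual network `N_x` has nonnegative transit time, `B` is a
residual cycle with `τ(B) = 0`, and `B'` is any cycle of the residual network of
`x + χ^B`, then `B'` has nonnegative transit time. -/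
theorem cycle_after_zero_augmentation_nonneg_transit {V A : Type*}
    [Fintype A] [DecidableEq V] [DecidableEq A] (N : Network V A) (τ : A → ℕ)
    (x : A → ℤ)
    (hno : ∀ (q : V) (l : List (A ⊕ A)), N.IsResCycle x q l → 0 ≤ (l.map (resTT τ)).sum)
    (p : V) (B : List (A ⊕ A)) (hB : N.IsResCycle x p B)
    (hτB : (B.map (resTT τ)).sum = 0)
    (p' : V) (B' : List (A ⊕ A))
    (hB' : N.IsResCycle
      (fun a => x a + ((B.count (Sum.inl a) : ℤ) - (B.count (Sum.inr a) : ℤ))) p' B') :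
    0 ≤ (B'.map (resTT τ)).sum := by
  classical
  obtain ⟨⟨hBch, hBpos⟩, hBne, hBnd⟩ := hB
  obtain ⟨⟨hB'ch, hB'pos⟩, hB'ne, hB'nd⟩ := hB'
  -- arcs of B' that are not residual w.r.t. x have their reverse in B
  have hrevmem : ∀ e ∈ B', N.resCap x e ≤ 0 → revArc e ∈ B := by
    intro e he hbad
    have hpos' := hB'pos e he
    cases e with
    | inl a =>
      simp only [Network.resCap, Sum.elim_inl] at hpos' hbad
      have h1 : (0:ℤ) < (B.count (Sum.inr a) : ℤ) := by omega
      have : 0 < B.count (Sum.inr a) := by exact_mod_cast h1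
      simpa [revArc] using List.count_pos_iff.mp this
    | inr a =>
      simp only [Network.resCap, Sum.elim_inr] at hpos' hbad
      have h1 : (0:ℤ) < (B.count (Sum.inl a) : ℤ) := by omega
      have : 0 < B.count (Sum.inl a) := by exact_mod_cast h1
      simpa [revArc] using List.count_pos_iff.mp this
  set Bm : Multiset (A ⊕ A) := (B : Multiset (A ⊕ A)) with hBm
  set B'm : Multiset (A ⊕ A) := (B' : Multiset (A ⊕ A)) with hB'm
  set Sm : Multiset (A ⊕ A) := B'm.filter (fun e => N.resCap x e ≤ 0) with hSm
  set Rm : Multiset (A ⊕ A) := Sm.map revArc with hRm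
  have hSleB' : Sm ≤ B'm := Multiset.filter_le _ _
  have hB'mnd : B'm.Nodup := Multiset.coe_nodup.mpr (List.Nodup.of_map _ hB'nd)
  have hSnd : Sm.Nodup := Multiset.Nodup.filter _ hB'mnd
  have hRnd : Rm.Nodup := Multiset.Nodup.map revArc_injective hSnd
  have hRleB : Rm ≤ Bm := by
    rw [Multiset.le_iff_subset hRnd]
    intro e he
    obtain ⟨f, hf, rfl⟩ := Multiset.mem_map.mp he
    have hf' := Multiset.mem_filter.mp hf
    exact Multiset.mem_coe.mpr (hrevmem f (Multiset.mem_coe.mp hf'.1) hf'.2)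
  set D1 : Multiset (A ⊕ A) := Bm - Rm with hD1
  set D2 : Multiset (A ⊕ A) := B'm - Sm with hD2
  have h1 : D1 + Rm = Bm := tsub_add_cancel_of_le hRleB
  have h2 : D2 + Sm = B'm := tsub_add_cancel_of_le hSleB'
  set M : Multiset (A ⊕ A) := D1 + D2 with hM
  -- balance of M
  have hbalM : ∀ v, M.countP (fun e => N.resHead e = v) = M.countP (fun e => N.resTail e = v) := by
    intro v
    have hcB : Multiset.countP (fun e => N.resHead e = v) Bm
        = Multiset.countP (fun e => N.resTail e = v) Bm := by
      have := arcChain_countP B p p hBch v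
      simp only [hBm, Multiset.coe_countP]
      omega
    have hcB' : Multiset.countP (fun e => N.resHead e = v) B'm
        = Multiset.countP (fun e => N.resTail e = v) B'm := by
      have := arcChain_countP B' p' p' hB'ch v
      simp only [hB'm, Multiset.coe_countP]
      omega
    have hRh : Multiset.countP (fun e => N.resHead e = v) Rm
        = Multiset.countP (fun e => N.resTail e = v) Sm := by
      rw [hRm, Multiset.countP_map, Multiset.countP_eq_card_filter,
        Multiset.filter_congr (fun e _ => by rw [resHead_revArc])]
    have hRt : Multiset.countP (fun e => N.resTail e = v) Rm
        = Multiset.countP (fun e => N.resHead e = v) Sm := by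
      rw [hRm, Multiset.countP_map, Multiset.countP_eq_card_filter,
        Multiset.filter_congr (fun e _ => by rw [resTail_revArc])]
    have a1h : Multiset.countP (fun e => N.resHead e = v) D1
          + Multiset.countP (fun e => N.resHead e = v) Rm
        = Multiset.countP (fun e => N.resHead e = v) Bm := by
      rw [← h1, Multiset.countP_add]
    have a1t : Multiset.countP (fun e => N.resTail e = v) D1
          + Multiset.countP (fun e => N.resTail e = v) Rm
        = Multiset.countP (fun e => N.resTail e = v) Bm := by
      rw [← h1, Multiset.countP_add]
    have a2h : Multiset.countP (fun e => N.resHead e = v) D2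
          + Multiset.countP (fun e => N.resHead e = v) Sm
        = Multiset.countP (fun e => N.resHead e = v) B'm := by
      rw [← h2, Multiset.countP_add]
    have a2t : Multiset.countP (fun e => N.resTail e = v) D2
          + Multiset.countP (fun e => N.resTail e = v) Sm
        = Multiset.countP (fun e => N.resTail e = v) B'm := by
      rw [← h2, Multiset.countP_add]
    simp only [hM, Multiset.countP_add]
    omega
  -- positivity of arcs of M
  have hposM : ∀ e ∈ M, 0 < N.resCap x e := by
    intro e he
    rcases Multiset.mem_add.mp he with h | h
    · have : e ∈ Bm := Multiset.mem_of_le (h1 ▸ Multiset.le_add_right D1 Rm) h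
      exact hBpos e (Multiset.mem_coe.mp this)
    · by_contra hc
      push_neg at hc
      have hcount : Multiset.count e Sm = Multiset.count e B'm := by
        rw [hSm, Multiset.count_filter, if_pos hc]
      have hadd : Multiset.count e D2 + Multiset.count e Sm = Multiset.count e B'm := by
        rw [← h2, Multiset.count_add]
      have : Multiset.count e D2 = 0 := by omega
      exact absurd (Multiset.count_pos.mpr h) (by omega)
  -- apply the decomposition lemma
  have hM0 := decomp N τ x hno M hposM hbalM
  -- compute the sum
  have hsR : (Multiset.map (resTT τ) Rm).sum = -(Multiset.map (resTT τ) Sm).sum := by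
    rw [hRm, Multiset.map_map]
    rw [show ((resTT τ) ∘ revArc) = fun e => -resTT τ e from funext (resTT_revArc τ)]
    exact sum_map_neg_fun _ _
  have hs1 : (Multiset.map (resTT τ) D1).sum + (Multiset.map (resTT τ) Rm).sum
      = (Multiset.map (resTT τ) Bm).sum := by
    rw [← h1, Multiset.map_add, Multiset.sum_add]
  have hs2 : (Multiset.map (resTT τ) D2).sum + (Multiset.map (resTT τ) Sm).sum
      = (Multiset.map (resTT τ) B'm).sum := by
    rw [← h2, Multiset.map_add, Multiset.sum_add]
  have hsM : (Multiset.map (resTT τ) M).sum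
      = (Multiset.map (resTT τ) D1).sum + (Multiset.map (resTT τ) D2).sum := by
    rw [hM, Multiset.map_add, Multiset.sum_add]
  have hBsum : (Multiset.map (resTT τ) Bm).sum = 0 := by
    simpa [hBm] using hτB
  have hB'sum : (Multiset.map (resTT τ) B'm).sum = (B'.map (resTT τ)).sum := by
    simp [hB'm]
  linarith
end

section
/- Let f be a flow over time repeated during [θ₁, θ₂] and let B be a cycle in N_{φ(f)} with τ(B) = 0. Then for each i ∈ {θ₁, ..., θ₂ − h_{φ(f)}(B)}, the lifting C_i := lift(B, i) is a cycle in N^{[θ₁,θ₂]}_f with π(C_i) = B and c(C_i) = c(B), and the cycles C_{θ₁}, ..., C_{θ₂ − h_{φ(f)}(B)} are pairwise arc-disjoint. -/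
/-- A flow over time network: directed multigraph, source, sink, integral capacities and
transit times. -/
structure FOTN (V A : Type*) where
  tail : A → V
  head : A → V
  s : V
  t : V
  u : A → ℤ
  τ : A → ℕ

/-- Base arc of a residual arc. -/
def arcBase {A : Type*} : A ⊕ A → A := Sum.elim id id

/-- Lift a list of residual arcs starting at (integer) time `t`; each arc `e` is assigned
the layer of the copy it traverses, i.e. the smaller of its two endpoint times. -/
def liftFrom {E : Type*} (g : E → ℤ) : ℤ → List E → List (E × ℕ)
  | _, [] => []
  | t, e :: l => (e, (t + min 0 (g e)).toNat) :: liftFrom g (t + g e) l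

/-- The lifting of a walk to layer `θ'`: start at time `max θ' (θ' - h⁻)`. -/
def liftW {E : Type*} (g : E → ℤ) (l : List E) (θ' : ℕ) : List (E × ℕ) :=
  liftFrom g ((θ' : ℤ) - min 0 (hlo g l)) l

namespace FOTN
variable {V A : Type*} (N : FOTN V A)

/-- Tail of a residual arc in the base network. -/
def bTail : A ⊕ A → V := Sum.elim N.tail N.head

def bHead : A ⊕ A → V := Sum.elim N.head N.tail

/-- Residual capacity in the base network with respect to a static flow `x`. -/
def bCap (x : A → ℤ) : A ⊕ A → ℤ := Sum.elim (fun a => N.u a - x a) x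

/-- A walk in the residual network `N_x` of the base network. -/
def IsResWalk (x : A → ℤ) (p q : V) (l : List (A ⊕ A)) : Prop :=
  ArcChain N.bTail N.bHead p q l ∧ ∀ e ∈ l, 0 < N.bCap x e

/-- A cycle in the residual network `N_x` of the base network. -/
def IsResCycle (x : A → ℤ) (p : V) (l : List (A ⊕ A)) : Prop :=
  N.IsResWalk x p p l ∧ l ≠ [] ∧ (l.map N.bHead).Nodup

/-- Tail of a residual time-expanded arc `(e, ℓ)`: the copy `a^ℓ` of `a` goes from layer
`ℓ` to layer `ℓ + τ(a)`; backward arcs are reversed. -/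
def teTail : (A ⊕ A) × ℕ → V × ℕ
  | (Sum.inl a, ℓ) => (N.tail a, ℓ)
  | (Sum.inr a, ℓ) => (N.head a, ℓ + N.τ a)

def teHead : (A ⊕ A) × ℕ → V × ℕ
  | (Sum.inl a, ℓ) => (N.head a, ℓ + N.τ a)
  | (Sum.inr a, ℓ) => (N.tail a, ℓ)

/-- Residual capacity of a time-expanded residual arc with respect to a flow over time. -/
def teCap (f : A → ℕ → ℤ) : (A ⊕ A) × ℕ → ℤ
  | (Sum.inl a, ℓ) => N.u a - f a ℓ
  | (Sum.inr a, ℓ) => f a ℓ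

/-- The arc lies between layers `θ₁` and `θ₂` of the time-expanded network. -/
def InLayers (θ₁ θ₂ : ℕ) (e : (A ⊕ A) × ℕ) : Prop :=
  θ₁ ≤ e.2 ∧ e.2 + N.τ (arcBase e.1) ≤ θ₂

/-- Membership in the residual time-expanded network `N^{[θ₁,θ₂]}_f`. -/
def InResTEN (f : A → ℕ → ℤ) (θ₁ θ₂ : ℕ) (e : (A ⊕ A) × ℕ) : Prop :=
  0 < N.teCap f e ∧ N.InLayers θ₁ θ₂ e

/-- A walk in the residual time-expanded network `N^{[θ₁,θ₂]}_f`. -/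
def IsTENWalk (f : A → ℕ → ℤ) (θ₁ θ₂ : ℕ) (p q : V × ℕ) (l : List ((A ⊕ A) × ℕ)) : Prop :=
  ArcChain N.teTail N.teHead p q l ∧ ∀ e ∈ l, N.InResTEN f θ₁ θ₂ e

/-- A cycle in the residual time-expanded network `N^{[θ₁,θ₂]}_f`. -/
def IsTENCycle (f : A → ℕ → ℤ) (θ₁ θ₂ : ℕ) (p : V × ℕ) (l : List ((A ⊕ A) × ℕ)) : Prop :=
  N.IsTENWalk f θ₁ θ₂ p p l ∧ l ≠ [] ∧ (l.map N.teHead).Nodup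

/-- A flow over time with time horizon `θ`, as a static flow in the time-expanded
network: capacities, support on the existing copies `a^ℓ`, `ℓ ∈ {1,…,θ-1}`, and flow
conservation at every node other than the super-terminals (i.e. at all `v ≠ s, t`). -/
def IsFlowOverTime [Fintype A] [DecidableEq V] (f : A → ℕ → ℤ) (θ : ℕ) : Prop :=
  (∀ a ℓ, 0 ≤ f a ℓ ∧ f a ℓ ≤ N.u a) ∧
  (∀ a ℓ, ¬(1 ≤ ℓ ∧ ℓ + 1 ≤ θ) → f a ℓ = 0) ∧
  (∀ v, v ≠ N.s → v ≠ N.t → ∀ ℓ : ℕ,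
    (∑ a : A, if N.head a = v then f a (ℓ - N.τ a) else 0) =
    (∑ a : A, if N.tail a = v then f a ℓ else 0))

/-- `f` is repeated during `[θ₁, θ₂]`. -/
def Repeated (_Nw : FOTN V A) (f : A → ℕ → ℤ) (θ₁ θ₂ : ℕ) : Prop :=
  ∀ a : A, ∀ ℓ : ℕ, θ₁ ≤ ℓ → ℓ < θ₂ → f a ℓ = f a (ℓ + 1)

/-- The projection `φ(f)(a) := f(a^{θ₁})`. -/
def proj (_Nw : FOTN V A) (f : A → ℕ → ℤ) (θ₁ : ℕ) : A → ℤ := fun a => f a θ₁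

end FOTN

section Aux
variable {V A E : Type*}

lemma foldr_min_le_init (L : List ℤ) (b : ℤ) : L.foldr min b ≤ b := by
  induction L with
  | nil => simp
  | cons a L ih => exact le_trans (min_le_right _ _) ih

lemma foldr_min_le_mem {L : List ℤ} {b x : ℤ} (h : x ∈ L) : L.foldr min b ≤ x := by
  induction L with
  | nil => simp at h
  | cons a L ih =>
    rcases List.mem_cons.mp h with rfl | h
    · exact min_le_left _ _
    · exact le_trans (min_le_right _ _) (ih h)

lemma le_foldr_max_mem {L : List ℤ} {b x : ℤ} (h : x ∈ L) : x ≤ L.foldr max b := by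
  induction L with
  | nil => simp at h
  | cons a L ih =>
    rcases List.mem_cons.mp h with rfl | h
    · exact le_max_left _ _
    · exact le_trans (ih h) (le_max_right _ _)

lemma psums_zero_mem (g : E → ℤ) (l : List E) : (0:ℤ) ∈ psums g l := by
  cases l <;> simp [psums]

lemma psums_cons_mem (g : E → ℤ) (e : E) (l : List E) {s : ℤ} (hs : s ∈ psums g l) :
    g e + s ∈ psums g (e :: l) := by
  simp only [psums, List.mem_cons, List.mem_map]
  exact Or.inr ⟨s, hs, rfl⟩

lemma hlo_le_mem (g : E → ℤ) (l : List E) {s : ℤ} (hs : s ∈ psums g l) : hlo g l ≤ s :=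
  foldr_min_le_mem hs

lemma le_hhi_mem (g : E → ℤ) (l : List E) {s : ℤ} (hs : s ∈ psums g l) : s ≤ hhi g l :=
  le_foldr_max_mem hs

lemma hlo_nonpos (g : E → ℤ) (l : List E) : hlo g l ≤ 0 :=
  hlo_le_mem g l (psums_zero_mem g l)

lemma liftFrom_map_fst (g : E → ℤ) : ∀ (l : List E) (t : ℤ),
    (liftFrom g t l).map Prod.fst = l := by
  intro l
  induction l with
  | nil => intro t; rfl
  | cons e l ih => intro t; simp [liftFrom, ih]

lemma teHead_fst (N : FOTN V A) (x : (A ⊕ A) × ℕ) : (N.teHead x).1 = N.bHead x.1 := by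
  obtain ⟨e | e, ℓ⟩ := x <;> rfl

lemma resTT_inl (N : FOTN V A) (a : A) : resTT N.τ (Sum.inl a) = (N.τ a : ℤ) := rfl
lemma resTT_inr (N : FOTN V A) (a : A) : resTT N.τ (Sum.inr a) = -(N.τ a : ℤ) := rfl

lemma chain_lift (N : FOTN V A) : ∀ (l : List (A ⊕ A)) (p q : V) (t : ℤ),
    (∀ s ∈ psums (resTT N.τ) l, 0 ≤ t + s) →
    ArcChain N.bTail N.bHead p q l →
    ArcChain N.teTail N.teHead (p, t.toNat)
      (q, (t + (l.map (resTT N.τ)).sum).toNat) (liftFrom (resTT N.τ) t l) := by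
  intro l
  induction l with
  | nil =>
    intro p q t _ h
    simpa [ArcChain, liftFrom] using h
  | cons e l ih =>
    intro p q t hb h
    obtain ⟨he, hrest⟩ := h
    have h0 : (0:ℤ) ≤ t := by simpa using hb 0 (psums_zero_mem _ _)
    have h1 : (0:ℤ) ≤ t + resTT N.τ e := by
      simpa using hb (resTT N.τ e) (by simpa using psums_cons_mem (resTT N.τ) e l (psums_zero_mem _ _))
    have hnext : ∀ s ∈ psums (resTT N.τ) l, 0 ≤ (t + resTT N.τ e) + s := by
      intro s hs
      have := hb (resTT N.τ e + s) (psums_cons_mem _ e l hs)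
      linarith
    have hsum : t + ((e :: l).map (resTT N.τ)).sum = (t + resTT N.τ e) + (l.map (resTT N.τ)).sum := by
      simp [add_assoc]
    have hrec := ih (N.bHead e) q (t + resTT N.τ e) hnext hrest
    cases e with
    | inl a =>
      have hmin : min 0 (resTT N.τ (Sum.inl a)) = 0 := min_eq_left (by simp [resTT])
      refine ⟨?_, ?_⟩
      · show N.teTail (Sum.inl a, (t + min 0 (resTT N.τ (Sum.inl a))).toNat) = (p, t.toNat)
        simp only [hmin, add_zero, FOTN.teTail]
        exact congrArg (·, t.toNat) he
      · have hh : N.teHead (Sum.inl a, (t + min 0 (resTT N.τ (Sum.inl a))).toNat)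
            = (N.bHead (Sum.inl a), (t + resTT N.τ (Sum.inl a)).toNat) := by
          simp only [hmin, add_zero, FOTN.teHead, FOTN.bHead, Sum.elim_inl, resTT_inl]
          congr 1
          omega
        rw [hsum]
        exact hh ▸ hrec
    | inr a =>
      have hmin : min 0 (resTT N.τ (Sum.inr a)) = resTT N.τ (Sum.inr a) :=
        min_eq_right (by simp [resTT_inr])
      have hnn : (0:ℤ) ≤ t - N.τ a := by
        have := h1; rw [resTT_inr] at this; linarith
      have hm : min 0 (resTT N.τ (Sum.inr a)) = -(N.τ a:ℤ) := min_eq_right (by simp [resTT])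
      have hnat : (t + -(N.τ a:ℤ)).toNat + N.τ a = t.toNat := by omega
      refine ⟨?_, ?_⟩
      · show (N.head a, ((t + min 0 (resTT N.τ (Sum.inr a))).toNat) + N.τ a) = (p, t.toNat)
        rw [hm, hnat]
        exact congrArg (·, t.toNat) he
      · have hh : N.teHead (Sum.inr a, (t + min 0 (resTT N.τ (Sum.inr a))).toNat)
            = (N.bHead (Sum.inr a), (t + resTT N.τ (Sum.inr a)).toNat) := by
          simp only [hmin, FOTN.teHead, FOTN.bHead, Sum.elim_inr]
        rw [hsum]
        exact hh ▸ hrec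

lemma rep_eq (N : FOTN V A) {f : A → ℕ → ℤ} {θ₁ θ₂ : ℕ} (hrep : N.Repeated f θ₁ θ₂)
    (a : A) : ∀ ℓ, θ₁ ≤ ℓ → ℓ ≤ θ₂ → f a ℓ = f a θ₁ := by
  intro ℓ h1
  induction ℓ, h1 using Nat.le_induction with
  | base => intro _; rfl
  | succ n hn ih =>
    intro h2
    rw [← hrep a n hn (by omega)]
    exact ih (by omega)

lemma lift_mem (N : FOTN V A) (f : A → ℕ → ℤ) (θ₁ θ₂ : ℕ)
    (hrep : N.Repeated f θ₁ θ₂) :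
    ∀ (l : List (A ⊕ A)) (t : ℤ),
    (∀ s ∈ psums (resTT N.τ) l, (θ₁:ℤ) ≤ t + s ∧ t + s ≤ θ₂) →
    (∀ e ∈ l, 0 < N.bCap (N.proj f θ₁) e) →
    ∀ x ∈ liftFrom (resTT N.τ) t l, N.InResTEN f θ₁ θ₂ x := by
  intro l
  induction l with
  | nil => intro t _ _ x hx; simp [liftFrom] at hx
  | cons e l ih =>
    intro t hb hcap x hx
    have hb0 := hb 0 (psums_zero_mem _ _)
    have hb1 := hb (resTT N.τ e) (by simpa using psums_cons_mem (resTT N.τ) e l (psums_zero_mem _ _))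
    rw [add_zero] at hb0
    rcases List.mem_cons.mp hx with rfl | hx
    · cases e with
      | inl a =>
        have hmin : min 0 (resTT N.τ (Sum.inl a)) = 0 := min_eq_left (by simp [resTT])
        rw [resTT_inl] at hb1
        constructor
        · show 0 < N.teCap f (Sum.inl a, (t + min 0 (resTT N.τ (Sum.inl a))).toNat)
          simp only [hmin, add_zero, FOTN.teCap]
          have heq : f a (t.toNat) = f a θ₁ :=
            rep_eq N hrep a t.toNat (by omega) (by omega)
          rw [heq]
          simpa [FOTN.bCap, FOTN.proj] using hcap (Sum.inl a) List.mem_cons_self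
        · constructor
          · simp only [hmin, add_zero]; omega
          · show (t + min 0 (resTT N.τ (Sum.inl a))).toNat + N.τ (arcBase (Sum.inl a)) ≤ θ₂
            simp only [hmin, add_zero, arcBase, Sum.elim_inl, id]
            omega
      | inr a =>
        have hmin : min 0 (resTT N.τ (Sum.inr a)) = -(N.τ a : ℤ) :=
          min_eq_right (by simp [resTT_inr])
        rw [resTT_inr] at hb1
        constructor
        · show 0 < N.teCap f (Sum.inr a, (t + min 0 (resTT N.τ (Sum.inr a))).toNat)
          simp only [hmin, FOTN.teCap]
          have heq : f a ((t + -(N.τ a : ℤ)).toNat) = f a θ₁ :=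
            rep_eq N hrep a _ (by omega) (by omega)
          rw [heq]
          simpa [FOTN.bCap, FOTN.proj] using hcap (Sum.inr a) List.mem_cons_self
        · constructor
          · simp only [hmin]; omega
          · show (t + min 0 (resTT N.τ (Sum.inr a))).toNat + N.τ (arcBase (Sum.inr a)) ≤ θ₂
            simp only [hmin, arcBase, Sum.elim_inr, id]
            omega
    · refine ih (t + resTT N.τ e) ?_ (fun e' h => hcap e' (List.mem_cons_of_mem _ h)) x hx
      intro s hs
      have := hb (resTT N.τ e + s) (psums_cons_mem _ e l hs)
      constructor <;> linarith [this.1, this.2]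

lemma lift_disjoint (g : E → ℤ) : ∀ (l : List E), l.Nodup → ∀ (t t' : ℤ), t ≠ t' →
    (∀ s ∈ psums g l, 0 ≤ t + s) → (∀ s ∈ psums g l, 0 ≤ t' + s) →
    ∀ x, x ∈ liftFrom g t l → x ∉ liftFrom g t' l := by
  intro l
  induction l with
  | nil => intro _ t t' _ _ _ x hx; simp [liftFrom] at hx
  | cons e l ih =>
    intro hnd t t' hne hb hb' x hx hx'
    have hmem : ∀ (u : ℤ) (y : E × ℕ), y ∈ liftFrom g u l → y.1 ∈ l := by
      intro u y hy
      have := liftFrom_map_fst g l u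
      rw [← this]
      exact List.mem_map_of_mem (f := Prod.fst) hy
    have henl : e ∉ l := (List.nodup_cons.mp hnd).1
    have h0 : (0:ℤ) ≤ t := by simpa using hb 0 (psums_zero_mem _ _)
    have h0' : (0:ℤ) ≤ t' := by simpa using hb' 0 (psums_zero_mem _ _)
    have h1 : (0:ℤ) ≤ t + g e := by
      simpa using hb (g e) (by simpa using psums_cons_mem g e l (psums_zero_mem _ _))
    have h1' : (0:ℤ) ≤ t' + g e := by
      simpa using hb' (g e) (by simpa using psums_cons_mem g e l (psums_zero_mem _ _))
    rcases List.mem_cons.mp hx with rfl | hx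
    · rcases List.mem_cons.mp hx' with heq | hx'
      · have : (t + min 0 (g e)).toNat = (t' + min 0 (g e)).toNat := congrArg Prod.snd heq
        have hge : min 0 (g e) = 0 ∨ min 0 (g e) = g e := by
          rcases le_total 0 (g e) with h | h
          · exact Or.inl (min_eq_left h)
          · exact Or.inr (min_eq_right h)
        rcases hge with h | h <;> rw [h] at this <;> omega
      · exact henl (hmem _ _ hx')
    · rcases List.mem_cons.mp hx' with heq | hx'
      · subst heq
        exact henl (hmem _ _ hx)
      · refine ih (List.nodup_cons.mp hnd).2 (t + g e) (t' + g e) (by omega) ?_ ?_ x hx hx'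
        · intro s hs
          have := hb (g e + s) (psums_cons_mem g e l hs); linarith
        · intro s hs
          have := hb' (g e + s) (psums_cons_mem g e l hs); linarith

end Aux

/-- For `f` repeated during `[θ₁, θ₂]` and a cycle `B` of `N_{φ(f)}` with `τ(B) = 0`:
each lifting `C_i = lift(B, i)`, `θ₁ ≤ i`, `i + h(B) ≤ θ₂`, is a cycle of
`N^{[θ₁,θ₂]}_f` with `π(C_i) = B` and `c(C_i) = c(B)`, and the liftings are pairwise
arc-disjoint. -/
theorem liftings_of_zero_transit_cycle {V A : Type*}
    [Fintype A] [DecidableEq V] (N : FOTN V A) (c : A → ℤ) (hτ : ∀ a, N.τ a ≤ 1)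
    (f : A → ℕ → ℤ) (θ θ₁ θ₂ : ℕ)
    (hf : N.IsFlowOverTime f θ) (hrep : N.Repeated f θ₁ θ₂)
    (h1 : 1 ≤ θ₁) (h2 : θ₁ + 2 ≤ θ₂) (h3 : θ₂ + 1 ≤ θ)
    (p : V) (B : List (A ⊕ A)) (hB : N.IsResCycle (N.proj f θ₁) p B)
    (hτB : (B.map (resTT N.τ)).sum = 0) :
    (∀ i : ℕ, θ₁ ≤ i → (i : ℤ) + spreadOf (resTT N.τ) B ≤ θ₂ →
      N.IsTENCycle f θ₁ θ₂
        (p, ((i : ℤ) - min 0 (hlo (resTT N.τ) B)).toNat)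
        (liftW (resTT N.τ) B i) ∧
      (liftW (resTT N.τ) B i).map Prod.fst = B ∧
      ((liftW (resTT N.τ) B i).map (fun e => resC c e.1)).sum = (B.map (resC c)).sum) ∧
    (∀ i j : ℕ, θ₁ ≤ i → (i : ℤ) + spreadOf (resTT N.τ) B ≤ θ₂ →
      θ₁ ≤ j → (j : ℤ) + spreadOf (resTT N.τ) B ≤ θ₂ → i ≠ j →
      ∀ e, e ∈ liftW (resTT N.τ) B i → e ∉ liftW (resTT N.τ) B j) := by
  obtain ⟨⟨hchain, hcap⟩, hne, hnodup⟩ := hB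
  have hlo0 : min 0 (hlo (resTT N.τ) B) = hlo (resTT N.τ) B :=
    min_eq_right (hlo_nonpos _ _)
  have hBnd : B.Nodup := by
    have := hnodup
    exact List.Nodup.of_map N.bHead this
  have hbound : ∀ i : ℕ, θ₁ ≤ i → (i:ℤ) + spreadOf (resTT N.τ) B ≤ θ₂ →
      ∀ s ∈ psums (resTT N.τ) B,
        (θ₁:ℤ) ≤ ((i:ℤ) - min 0 (hlo (resTT N.τ) B)) + s ∧
        ((i:ℤ) - min 0 (hlo (resTT N.τ) B)) + s ≤ θ₂ := by
    intro i hi1 hi2 s hs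
    have hl := hlo_le_mem (resTT N.τ) B hs
    have hh := le_hhi_mem (resTT N.τ) B hs
    have hc : (θ₁:ℤ) ≤ i := by exact_mod_cast hi1
    unfold spreadOf at hi2
    rw [hlo0]
    constructor <;> linarith
  constructor
  · intro i hi1 hi2
    have hbi := hbound i hi1 hi2
    have hfst : (liftW (resTT N.τ) B i).map Prod.fst = B := liftFrom_map_fst _ _ _
    refine ⟨⟨⟨?_, ?_⟩, ?_, ?_⟩, hfst, ?_⟩
    · have hc := chain_lift N B p p ((i:ℤ) - min 0 (hlo (resTT N.τ) B))
        (fun s hs => by have := (hbi s hs).1; have : (0:ℤ) ≤ θ₁ := Int.ofNat_nonneg θ₁; linarith [(hbi s hs).1])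
        hchain
      rw [hτB, add_zero] at hc
      exact hc
    · exact lift_mem N f θ₁ θ₂ hrep B _ hbi hcap
    · intro h
      apply hne
      rw [← hfst, h]
      rfl
    · apply List.Nodup.of_map Prod.fst
      have : ((liftW (resTT N.τ) B i).map N.teHead).map Prod.fst
          = ((liftW (resTT N.τ) B i).map Prod.fst).map N.bHead := by
        simp only [List.map_map]
        exact List.map_congr_left (fun x _ => teHead_fst N x)
      rw [this, hfst]
      exact hnodup
    · have : (liftW (resTT N.τ) B i).map (fun e => resC c e.1)
          = ((liftW (resTT N.τ) B i).map Prod.fst).map (resC c) := by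
        simp [List.map_map]
      rw [this, hfst]
  · intro i j hi1 hi2 hj1 hj2 hij
    refine lift_disjoint (resTT N.τ) B hBnd _ _ ?_ ?_ ?_
    · intro h
      apply hij
      have : (i:ℤ) = j := by omega
      exact_mod_cast this
    · intro s hs
      have := (hbound i hi1 hi2 s hs).1
      have hc : (0:ℤ) ≤ θ₁ := Int.ofNat_nonneg θ₁
      linarith
    · intro s hs
      have := (hbound j hj1 hj2 s hs).1
      have hc : (0:ℤ) ≤ θ₁ := Int.ofNat_nonneg θ₁
      linarith
end
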